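/- For any nonempty set S in a finite-dimensional real inner product space, the closure of the domain of the concave support function ρ_S(x*) = inf{⟨x*, x⟩ | x ∈ S} equals the dual cone of the recession cone of the closed convex hull of S: cl(dom ρ_S) = (rec(cl conv S))*. -/

import Mathlib

open InnerProductSpace

private lemma mem_innerDualCone {E : Type*} [NormedAddCommGroup E] [InnerProductSpace ℝ E]
    [CompleteSpace E] {s : Set E} {y : E} :
    y ∈ ProperCone.innerDual s ↔ ∀ x ∈ s, 0 ≤ ⟪x, y⟫_ℝ := Iff.rfl

private lemma aux_dom_iff {E : Type*} [NormedAddCommGroup E] [InnerProductSpace ℝ E]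
    (S : Set E) (hS : S.Nonempty) (y : E) :
    (⊥ : EReal) < ⨅ x ∈ S, ((⟪y, x⟫_ℝ : ℝ) : EReal) ↔ ∃ m : ℝ, ∀ x ∈ S, m ≤ ⟪y, x⟫_ℝ := by
  constructor
  · intro h
    obtain ⟨x₀, hx₀⟩ := hS
    set I := ⨅ x ∈ S, ((⟪y, x⟫_ℝ : ℝ) : EReal) with hI
    have hle : I ≤ ((⟪y, x₀⟫_ℝ : ℝ) : EReal) := iInf₂_le _ hx₀
    have hne_top : I ≠ ⊤ := (hle.trans_lt (EReal.coe_lt_top _)).ne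
    have hne_bot : I ≠ ⊥ := h.ne'
    refine ⟨I.toReal, fun x hx => ?_⟩
    have hIx : I ≤ ((⟪y, x⟫_ℝ : ℝ) : EReal) := iInf₂_le _ hx
    rw [← EReal.coe_toReal hne_top hne_bot] at hIx
    exact_mod_cast hIx
  · rintro ⟨m, hm⟩
    calc (⊥ : EReal) < ((m : ℝ) : EReal) := EReal.bot_lt_coe m
      _ ≤ _ := le_iInf₂ fun x hx => by exact_mod_cast hm x hx

private lemma aux_bdd_iff {E : Type*} [NormedAddCommGroup E] [InnerProductSpace ℝ E]
    (S : Set E) (y : E) (m : ℝ) :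
    (∀ x ∈ S, m ≤ ⟪y, x⟫_ℝ) ↔ ∀ x ∈ closure (convexHull ℝ S), m ≤ ⟪y, x⟫_ℝ := by
  constructor
  · intro h x hx
    have hlin : IsLinearMap ℝ (fun x : E => ⟪y, x⟫_ℝ) :=
      ⟨fun a b => inner_add_right y a b, fun c a => real_inner_smul_right y a c⟩
    have hconv : Convex ℝ {x : E | m ≤ ⟪y, x⟫_ℝ} := convex_halfSpace_ge hlin m
    have hclosed : IsClosed {x : E | m ≤ ⟪y, x⟫_ℝ} :=
      isClosed_le continuous_const (continuous_const.inner continuous_id)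
    exact closure_minimal (convexHull_min (fun z hz => h z hz) hconv) hclosed hx
  · intro h x hx
    exact h x (subset_closure (subset_convexHull ℝ S hx))

/-- For any nonempty `S` in a finite-dimensional real inner product space, the closure of
the domain of the concave support function `ρ_S(x*) = inf {⟪x*, x⟫ | x ∈ S}` (the set
where `ρ_S > -∞`) equals the dual cone of the recession cone of `cl conv S`. -/
theorem closure_domain_concaveSupport_eq_dualCone_recessionCone
    {E : Type*} [NormedAddCommGroup E] [InnerProductSpace ℝ E] [FiniteDimensional ℝ E]
    (S : Set E) (hS : S.Nonempty) :
    closure {y : E | (⊥ : EReal) < ⨅ x ∈ S, ((⟪y, x⟫_ℝ : ℝ) : EReal)} =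
      {y : E | ∀ d ∈ {d : E | ∀ a ∈ closure (convexHull ℝ S),
          a + d ∈ closure (convexHull ℝ S)}, 0 ≤ ⟪y, d⟫_ℝ} := by
  classical
  have : CompleteSpace E := FiniteDimensional.complete ℝ E
  obtain ⟨x₀, hx₀S⟩ := hS
  set C : Set E := closure (convexHull ℝ S) with hCdef
  have hx₀C : x₀ ∈ C := subset_closure (subset_convexHull ℝ S hx₀S)
  have hCconv : Convex ℝ C := (convex_convexHull ℝ S).closure
  have hCclosed : IsClosed C := isClosed_closure
  set D : Set E := {y : E | ∃ m : ℝ, ∀ x ∈ S, m ≤ ⟪y, x⟫_ℝ} with hDdef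
  have hDset : {y : E | (⊥ : EReal) < ⨅ x ∈ S, ((⟪y, x⟫_ℝ : ℝ) : EReal)} = D := by
    ext y; exact aux_dom_iff S ⟨x₀, hx₀S⟩ y
  have h0D : (0 : E) ∈ D := ⟨0, fun x _ => by simp⟩
  -- the key characterization of the recession set as the dual cone of D
  have key : ∀ d : E, (∀ a ∈ C, a + d ∈ C) ↔ ∀ y ∈ D, 0 ≤ ⟪y, d⟫_ℝ := by
    intro d
    constructor
    · rintro hd y ⟨m, hm⟩
      have hmC : ∀ x ∈ C, m ≤ ⟪y, x⟫_ℝ := (aux_bdd_iff S y m).mp hm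
      have hiter : ∀ n : ℕ, x₀ + n • d ∈ C := by
        intro n
        induction n with
        | zero => simpa using hx₀C
        | succ n ih =>
          have h' := hd _ ih
          have : x₀ + n • d + d = x₀ + (n + 1) • d := by
            rw [succ_nsmul, add_assoc]
          rwa [this] at h'
      by_contra hneg
      push_neg at hneg
      obtain ⟨n, hn⟩ := exists_nat_gt ((⟪y, x₀⟫_ℝ - m) / (-⟪y, d⟫_ℝ))
      have hb := hmC _ (hiter n)
      have hinner : ⟪y, x₀ + n • d⟫_ℝ = ⟪y, x₀⟫_ℝ + (n : ℝ) * ⟪y, d⟫_ℝ := by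
        rw [inner_add_right, (Nat.cast_smul_eq_nsmul ℝ n d).symm, real_inner_smul_right]
      rw [hinner] at hb
      have hpos : (0 : ℝ) < -⟪y, d⟫_ℝ := by linarith
      have := (div_lt_iff₀ hpos).mp hn
      linarith
    · intro hdual a ha
      by_contra hnot
      obtain ⟨f, u, hfu, hub⟩ := geometric_hahn_banach_point_closed hCconv hCclosed hnot
      set y := (toDual ℝ E).symm f with hy
      have hyx : ∀ x : E, ⟪y, x⟫_ℝ = f x := fun x => toDual_symm_apply
      have hyD : y ∈ D := ⟨u, fun x hx => by
        rw [hyx]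
        exact (hub x (subset_closure (subset_convexHull ℝ S hx))).le⟩
      have h0 := hdual y hyD
      have h1 : ⟪y, a + d⟫_ℝ = ⟪y, a⟫_ℝ + ⟪y, d⟫_ℝ := inner_add_right y a d
      have h2 : f (a + d) < u := hfu
      have h3 : u < f a := hub a ha
      rw [hyx, hyx] at h1
      linarith
  -- D as a convex cone
  set K : ConvexCone ℝ E :=
    { carrier := D
      smul_mem' := by
        rintro c hc y ⟨m, hm⟩
        refine ⟨c * m, fun x hx => ?_⟩
        rw [real_inner_smul_left]
        exact mul_le_mul_of_nonneg_left (hm x hx) hc.le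
      add_mem' := by
        rintro y₁ ⟨m₁, hm₁⟩ y₂ ⟨m₂, hm₂⟩
        refine ⟨m₁ + m₂, fun x hx => ?_⟩
        rw [inner_add_left]
        exact add_le_add (hm₁ x hx) (hm₂ x hx) } with hK
  have hKc_ne : (K.closure : Set E).Nonempty := ⟨0, subset_closure h0D⟩
  have hKc_cl : IsClosed (K.closure : Set E) := by
    rw [ConvexCone.coe_closure]; exact isClosed_closure
  have hbip : (ProperCone.innerDual (ProperCone.innerDual (K.closure : Set E) : Set E) : Set E)
      = K.closure := by
    obtain ⟨P, hP⟩ : ∃ P : ProperCone ℝ E, (P : ConvexCone ℝ E) = K.closure :=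
      CanLift.prf _ ⟨hKc_ne, hKc_cl⟩
    have hPs : (P : Set E) = (K.closure : Set E) := by rw [← hP]; rfl
    rw [← hPs, ProperCone.innerDual_innerDual]
  -- dual of D equals dual of closure D
  have hdual_eq : (ProperCone.innerDual D : Set E) = (ProperCone.innerDual (K.closure : Set E) : Set E) := by
    ext d
    simp only [SetLike.mem_coe, mem_innerDualCone, ConvexCone.coe_closure]
    constructor
    · intro h y hy
      have hcl : closure D ⊆ {y : E | 0 ≤ ⟪y, d⟫_ℝ} := by
        refine closure_minimal (fun z hz => h z hz) ?_
        exact isClosed_le continuous_const (continuous_id.inner continuous_const)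
      exact hcl hy
    · intro h y hy
      exact h y (subset_closure hy)
  rw [hDset]
  ext y
  constructor
  · intro hy d hd
    have hd' : d ∈ (ProperCone.innerDual D : Set E) := by
      rw [SetLike.mem_coe, mem_innerDualCone]
      exact (key d).mp hd
    rw [hdual_eq] at hd'
    have : y ∈ (ProperCone.innerDual (ProperCone.innerDual (K.closure : Set E) : Set E) : Set E) := by
      rw [hbip]
      exact hy
    rw [real_inner_comm]
    exact this hd'
  · intro hy
    have : y ∈ (ProperCone.innerDual (ProperCone.innerDual (K.closure : Set E) : Set E) : Set E) := by
      rw [SetLike.mem_coe, mem_innerDualCone]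
      intro d hd
      rw [← hdual_eq] at hd
      rw [SetLike.mem_coe, mem_innerDualCone] at hd
      rw [real_inner_comm]
      exact hy d ((key d).mpr hd)
    rw [hbip] at this
    exact this
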